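/- Let m be an even positive integer, let ℓ ≥ 3 be an integer, set θ = 2π/2^ℓ, and let C ⊆ F₂^m be a self-dual code, i.e. a linear code with dim C = m/2 and C = C^⊥. Then Σ_{v ∈ C} (i tan θ)^{w_H(v)} = (sec θ)^m if and only if 2^ℓ divides m − 2·w_H(v) for every v ∈ C. -/

import Mathlib

open scoped Classical

noncomputable section

/-- Hamming weight of a binary vector. -/
def wHam {n : ℕ} (a : Fin n → ZMod 2) : ℕ := ∑ i, (a i).val

/-- Integer dot product of the 0/1 representatives of two binary vectors. -/
def dotN {n : ℕ} (a b : Fin n → ZMod 2) : ℕ := ∑ i, (a i).val * (b i).val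

namespace SDAux

open Finset Complex

def dot2 {m : ℕ} (a b : Fin m → ZMod 2) : ZMod 2 := ∑ j, a j * b j

def eps (x : ZMod 2) : ℂ := if x = 0 then 1 else -1

lemma eps_add (a b : ZMod 2) : eps (a + b) = eps a * eps b := by
  rcases (by decide : ∀ x : ZMod 2, x = 0 ∨ x = 1) a with rfl | rfl <;>
    rcases (by decide : ∀ x : ZMod 2, x = 0 ∨ x = 1) b with rfl | rfl <;>
    simp [eps, show (1 : ZMod 2) + 1 = 0 from rfl]

lemma eps_sum {ι : Type*} (s : Finset ι) (f : ι → ZMod 2) :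
    eps (∑ j ∈ s, f j) = ∏ j ∈ s, eps (f j) := by
  induction s using Finset.cons_induction with
  | empty => simp [eps]
  | cons a s ha ih => rw [Finset.sum_cons, Finset.prod_cons, eps_add, ih]

lemma cast_dotN {m : ℕ} (a b : Fin m → ZMod 2) : ((dotN a b : ℕ) : ZMod 2) = dot2 a b := by
  simp [dotN, dot2, Nat.cast_sum, ZMod.natCast_val, ZMod.cast_id]

lemma dvd_dotN_iff {m : ℕ} (a b : Fin m → ZMod 2) : 2 ∣ dotN a b ↔ dot2 a b = 0 := by
  rw [← cast_dotN]
  exact (ZMod.natCast_eq_zero_iff _ 2).symm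

lemma sum_zmod2 (f : ZMod 2 → ℂ) : ∑ x : ZMod 2, f x = f 0 + f 1 := by
  rw [show (Finset.univ : Finset (ZMod 2)) = {0, 1} from rfl]
  simp

lemma zmod2_eq_one (a : ZMod 2) (h : a ≠ 0) : a = 1 := by
  rcases (by decide : ∀ x : ZMod 2, x = 0 ∨ x = 1) a with rfl | rfl <;> simp_all

lemma val_eq_ite (x : ZMod 2) : x.val = if x = 0 then 0 else 1 := by
  fin_cases x <;> rfl

lemma wHam_card {m : ℕ} (v : Fin m → ZMod 2) :
    wHam v = (Finset.univ.filter (fun j => ¬ v j = 0)).card := by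
  simp only [wHam, val_eq_ite]
  rw [Finset.sum_ite, Finset.sum_const, Finset.sum_const]
  simp

lemma wHam_le {m : ℕ} (v : Fin m → ZMod 2) : wHam v ≤ m := by
  rw [wHam_card]
  exact (Finset.card_filter_le _ _).trans (by simp)

lemma prod_ite_pow {m : ℕ} (A B : ℂ) (v : Fin m → ZMod 2) :
    ∏ j, (if v j = 0 then A else B) = A ^ (m - wHam v) * B ^ (wHam v) := by
  rw [Finset.prod_ite, Finset.prod_const, Finset.prod_const, ← wHam_card]
  congr 2
  have h := Finset.card_filter_add_card_filter_not (s := (Finset.univ : Finset (Fin m)))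
    (p := fun j => v j = 0)
  rw [Finset.card_univ, Fintype.card_fin] at h
  rw [wHam_card]
  omega

lemma dot2_add_left {m : ℕ} (a b w : Fin m → ZMod 2) :
    dot2 (a + b) w = dot2 a w + dot2 b w := by
  simp [dot2, add_mul, Finset.sum_add_distrib]

/-- Sum of unit complex numbers equals the cardinality iff all are `1`. -/
lemma sum_eq_card_iff {α : Type*} (s : Finset α) (f : α → ℂ)
    (h1 : ∀ a ∈ s, ‖f a‖ = 1) :
    (∑ a ∈ s, f a = (s.card : ℂ)) ↔ ∀ a ∈ s, f a = 1 := by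
  constructor
  · intro hsum
    have hre : ∑ a ∈ s, (f a).re = (s.card : ℝ) := by
      have := congrArg Complex.re hsum
      simpa [Complex.re_sum] using this
    have hle : ∀ a ∈ s, (f a).re ≤ 1 := by
      intro a ha
      calc (f a).re ≤ |(f a).re| := le_abs_self _
        _ ≤ ‖f a‖ := Complex.abs_re_le_norm _
        _ = 1 := h1 a ha
    have hre1 : ∀ a ∈ s, (f a).re = 1 := by
      by_contra hcon
      push_neg at hcon
      obtain ⟨a, ha, hane⟩ := hcon
      have : ∑ a ∈ s, (f a).re < ∑ a ∈ s, (1:ℝ) :=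
        Finset.sum_lt_sum hle ⟨a, ha, lt_of_le_of_ne (hle a ha) hane⟩
      rw [hre, Finset.sum_const, nsmul_eq_mul, mul_one] at this
      exact lt_irrefl _ this
    intro a ha
    have habs := h1 a ha
    have him : (f a).im = 0 := by
      have h2 : (f a).re * (f a).re + (f a).im * (f a).im = 1 := by
        have := Complex.sq_norm (f a)
        rw [habs] at this
        simpa [Complex.normSq_apply, sq] using this.symm
      rw [hre1 a ha] at h2
      have : (f a).im * (f a).im = 0 := by linarith
      exact mul_self_eq_zero.mp this
    exact Complex.ext (by rw [hre1 a ha]; rfl) (by rw [him]; rfl)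
  · intro h
    rw [Finset.sum_congr rfl h, Finset.sum_const, nsmul_eq_mul, mul_one]

lemma exp_eq_one_iff_dvd (ℓ : ℕ) (r : ℤ) (θ : ℝ) (hθ : θ = 2 * Real.pi / 2 ^ ℓ) :
    Complex.exp (((r : ℝ) : ℂ) * (θ : ℂ) * I) = 1 ↔ (2 ^ ℓ : ℤ) ∣ r := by
  rw [Complex.exp_eq_one_iff]
  constructor
  · rintro ⟨n, hn⟩
    refine ⟨n, ?_⟩
    have h3 : (r : ℝ) * (2 * Real.pi / 2 ^ ℓ) = (n : ℝ) * (2 * Real.pi) := by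
      rw [← hθ]
      have h := congrArg Complex.im hn
      simpa using h
    have h2π : (2 * Real.pi) ≠ 0 := by positivity
    have h4 : (r : ℝ) = (n : ℝ) * 2 ^ ℓ := by
      have h3' : (r : ℝ) * (2 * Real.pi) = ((n : ℝ) * 2 ^ ℓ) * (2 * Real.pi) := by
        have hp : (2:ℝ) ^ ℓ ≠ 0 := by positivity
        field_simp at h3
        linear_combination (2 * Real.pi) * h3
      exact mul_right_cancel₀ h2π h3'
    exact_mod_cast (by push_cast; linarith [h4] : (r:ℝ) = ((2 ^ ℓ * n : ℤ) : ℝ))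
  · rintro ⟨n, hn⟩
    refine ⟨n, ?_⟩
    have hr : (r : ℝ) = (2:ℝ) ^ ℓ * n := by exact_mod_cast congrArg (Int.cast : ℤ → ℝ) hn
    rw [hr, hθ]
    push_cast
    have h2 : (2:ℂ) ^ ℓ ≠ 0 := pow_ne_zero _ two_ne_zero
    field_simp

/-- The key expansion (one side of the MacWilliams-type identity). -/
lemma expand {m : ℕ} (c sI : ℂ) (v : Fin m → ZMod 2) :
    ∏ j, (c + eps (v j) * sI)
      = ∑ w : Fin m → ZMod 2, eps (dot2 v w) * (c ^ (m - wHam w) * sI ^ (wHam w)) := by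
  have hj : ∀ y : ZMod 2, c + eps y * sI
      = ∑ x : ZMod 2, eps (y * x) * (if x = 0 then c else sI) := by
    intro y
    rw [sum_zmod2]
    simp [eps, mul_comm]
  calc ∏ j, (c + eps (v j) * sI)
      = ∏ j, ∑ x : ZMod 2, eps (v j * x) * (if x = 0 then c else sI) := by
        exact Finset.prod_congr rfl fun j _ => hj (v j)
    _ = ∑ w ∈ Fintype.piFinset (fun _ : Fin m => (Finset.univ : Finset (ZMod 2))),
          ∏ j, eps (v j * w j) * (if w j = 0 then c else sI) := by
        rw [Finset.prod_univ_sum]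
    _ = ∑ w : Fin m → ZMod 2, eps (dot2 v w) * (c ^ (m - wHam w) * sI ^ (wHam w)) := by
        rw [Fintype.piFinset_univ]
        refine Finset.sum_congr rfl fun w _ => ?_
        rw [Finset.prod_mul_distrib, ← eps_sum, prod_ite_pow]
        rfl

end SDAux

open Finset Complex SDAux in
/-- For an `[m, m/2]` self-dual binary code `C` and `θ = 2π/2^ℓ` (`ℓ ≥ 3`),
`Σ_{v ∈ C} (i tan θ)^{w_H(v)} = (sec θ)^m` if and only if `2^ℓ` divides
`m − 2 w_H(v)` for every `v ∈ C`. -/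
theorem selfdual_tangent_sum (m : ℕ) (hm : Even m) (hm0 : 0 < m) (ℓ : ℕ) (hℓ : 3 ≤ ℓ)
    (C : Submodule (ZMod 2) (Fin m → ZMod 2))
    (hdim : 2 * Module.finrank (ZMod 2) C = m)
    (hsd : ∀ y : Fin m → ZMod 2, y ∈ C ↔ ∀ x ∈ C, 2 ∣ dotN x y) :
    ((∑ v : Fin m → ZMod 2, if v ∈ C then
        (Complex.I * (Real.tan (2 * Real.pi / 2 ^ ℓ) : ℂ)) ^ wHam v else 0) =
      ((Real.cos (2 * Real.pi / 2 ^ ℓ) : ℂ))⁻¹ ^ m) ↔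
    (∀ v : Fin m → ZMod 2, v ∈ C → (2 ^ ℓ : ℤ) ∣ ((m : ℤ) - 2 * (wHam v : ℤ))) := by
  set θ : ℝ := 2 * Real.pi / 2 ^ ℓ with hθ
  -- basic facts about θ
  have hπ := Real.pi_pos
  have h2ℓ : (8:ℝ) ≤ 2 ^ ℓ := by
    calc (8:ℝ) = 2 ^ 3 := by norm_num
    _ ≤ 2 ^ ℓ := by exact pow_le_pow_right₀ (by norm_num) hℓ
  have hθpos : 0 < θ := by
    rw [hθ]; positivity
  have hθlt : θ < Real.pi / 2 := by
    rw [hθ, div_lt_div_iff₀ (by positivity) (by norm_num)]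
    nlinarith
  have hc : 0 < Real.cos θ := Real.cos_pos_of_mem_Ioo ⟨by linarith, hθlt⟩
  have hcne : ((Real.cos θ : ℂ)) ≠ 0 := by
    simpa using Complex.ofReal_ne_zero.mpr (ne_of_gt hc)
  set c : ℂ := (Real.cos θ : ℂ) with hcdef
  set s : ℂ := (Real.sin θ : ℂ) with hsdef
  set D : Finset (Fin m → ZMod 2) := Finset.univ.filter (· ∈ C) with hD
  have hmemD : ∀ v, v ∈ D ↔ v ∈ C := by
    intro v; simp [hD]
  -- the LHS sum as a sum over D
  have hsum_eq : (∑ v : Fin m → ZMod 2, if v ∈ C then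
        (Complex.I * (Real.tan θ : ℂ)) ^ wHam v else 0)
      = ∑ v ∈ D, (Complex.I * (Real.tan θ : ℂ)) ^ wHam v := by
    rw [hD, Finset.sum_filter]
  -- T v : the exponential term
  set T : (Fin m → ZMod 2) → ℂ :=
    fun v => Complex.exp (((((m : ℤ) - 2 * (wHam v : ℤ) : ℤ) : ℝ) : ℂ) * (θ : ℂ) * I) with hT
  -- G v : the cosine-sine product term
  set G : (Fin m → ZMod 2) → ℂ := fun v => c ^ (m - wHam v) * (Complex.I * s) ^ (wHam v)
    with hG
  -- relation between tan-powers and G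
  have htanG : ∀ v : Fin m → ZMod 2,
      c ^ m * (Complex.I * (Real.tan θ : ℂ)) ^ wHam v = G v := by
    intro v
    have ht : ((Real.tan θ : ℂ)) = s / c := by
      rw [hcdef, hsdef, Real.tan_eq_sin_div_cos]; push_cast; ring
    rw [ht, hG]
    have hpow : c ^ m = c ^ (m - wHam v) * c ^ (wHam v) := by
      rw [← pow_add, Nat.sub_add_cancel (wHam_le v)]
    rw [hpow]
    have hcw : c ^ wHam v ≠ 0 := pow_ne_zero _ hcne
    field_simp
    rw [← mul_pow, mul_div_cancel₀ _ hcne]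
  -- the per-vector exponential identity : ∏ ghat = T v
  have hprodT : ∀ v : Fin m → ZMod 2, ∏ j, (c + eps (v j) * (Complex.I * s)) = T v := by
    intro v
    have hstep : ∀ y : ZMod 2, c + eps y * (Complex.I * s)
        = if y = 0 then Complex.exp ((θ:ℂ) * I) else Complex.exp (-((θ:ℂ) * I)) := by
      intro y
      by_cases hy : y = 0
      · rw [if_pos hy, hy, Complex.exp_mul_I]
        simp only [eps, if_pos rfl, one_mul, hcdef, hsdef]
        push_cast
        ring
      · rw [if_neg hy, show -((θ:ℂ) * I) = ((-θ : ℝ) : ℂ) * I by push_cast; ring,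
          Complex.exp_mul_I]
        rw [show eps y = -1 from by simp [eps, hy]]
        push_cast
        rw [Complex.cos_neg, Complex.sin_neg]
        simp only [hcdef, hsdef]
        push_cast
        ring
    calc ∏ j, (c + eps (v j) * (Complex.I * s))
        = ∏ j, (if v j = 0 then Complex.exp ((θ:ℂ) * I) else Complex.exp (-((θ:ℂ) * I))) :=
          Finset.prod_congr rfl fun j _ => hstep (v j)
      _ = Complex.exp ((θ:ℂ) * I) ^ (m - wHam v) * Complex.exp (-((θ:ℂ) * I)) ^ (wHam v) :=
          prod_ite_pow _ _ v
      _ = T v := by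
          rw [hT, ← Complex.exp_nat_mul, ← Complex.exp_nat_mul, ← Complex.exp_add]
          congr 1
          push_cast [Nat.cast_sub (wHam_le v)]
          ring
  -- character sum over the code
  have hchar : ∀ w : Fin m → ZMod 2,
      (∑ v ∈ D, eps (dot2 v w)) = if w ∈ C then (D.card : ℂ) else 0 := by
    intro w
    by_cases hw : w ∈ C
    · rw [if_pos hw]
      have : ∀ v ∈ D, eps (dot2 v w) = 1 := by
        intro v hv
        have hvC : v ∈ C := (hmemD v).mp hv
        have hdvd : 2 ∣ dotN v w := ((hsd w).mp hw) v hvC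
        rw [(dvd_dotN_iff v w).mp hdvd]
        rfl
      rw [Finset.sum_congr rfl this, Finset.sum_const, nsmul_eq_mul, mul_one]
    · rw [if_neg hw]
      obtain ⟨x, hxC, hxw⟩ : ∃ x ∈ C, ¬ 2 ∣ dotN x w := by
        by_contra hcon
        push_neg at hcon
        exact hw ((hsd w).mpr hcon)
      have hx1 : dot2 x w = 1 :=
        zmod2_eq_one _ (fun h => hxw ((dvd_dotN_iff x w).mpr h))
      have hflip : ∑ v ∈ D, eps (dot2 v w) = ∑ v ∈ D, eps (dot2 (v + x) w) := by
        refine Finset.sum_nbij' (fun v => v + x) (fun v => v + x) ?_ ?_ ?_ ?_ ?_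
        · intro a ha
          rw [hmemD] at ha ⊢
          exact C.add_mem ha hxC
        · intro a ha
          rw [hmemD] at ha ⊢
          exact C.add_mem ha hxC
        · intro a _
          funext j
          simp [add_assoc, CharTwo.add_self_eq_zero]
        · intro a _
          funext j
          simp [add_assoc, CharTwo.add_self_eq_zero]
        · intro a _
          rw [show (fun v => v + x) a + x = a from by
            funext j; simp [add_assoc, CharTwo.add_self_eq_zero]]
      have : ∑ v ∈ D, eps (dot2 (v + x) w) = - ∑ v ∈ D, eps (dot2 v w) := by
        rw [← Finset.sum_neg_distrib]
        refine Finset.sum_congr rfl fun v _ => ?_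
        rw [dot2_add_left, hx1, eps_add]
        simp [eps]
      rw [this] at hflip
      linear_combination hflip / 2
  -- MacWilliams-type identity
  have hGsum : ∑ w ∈ D, (c ^ (m - wHam w) * (Complex.I * s) ^ (wHam w))
      = c ^ m * ∑ v ∈ D, (Complex.I * (Real.tan θ : ℂ)) ^ wHam v := by
    rw [Finset.mul_sum]
    exact Finset.sum_congr rfl fun v _ => (htanG v).symm
  have hMacW : ∑ v ∈ D, T v
      = (D.card : ℂ) * ∑ w ∈ D, (c ^ (m - wHam w) * (Complex.I * s) ^ (wHam w)) := by
    calc ∑ v ∈ D, T v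
        = ∑ v ∈ D, ∏ j, (c + eps (v j) * (Complex.I * s)) :=
          Finset.sum_congr rfl fun v _ => (hprodT v).symm
      _ = ∑ v ∈ D, ∑ w : Fin m → ZMod 2,
            eps (dot2 v w) * (c ^ (m - wHam w) * (Complex.I * s) ^ (wHam w)) :=
          Finset.sum_congr rfl fun v _ => expand c (Complex.I * s) v
      _ = ∑ w : Fin m → ZMod 2, ∑ v ∈ D,
            eps (dot2 v w) * (c ^ (m - wHam w) * (Complex.I * s) ^ (wHam w)) :=
          Finset.sum_comm
      _ = ∑ w : Fin m → ZMod 2,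
            (∑ v ∈ D, eps (dot2 v w)) * (c ^ (m - wHam w) * (Complex.I * s) ^ (wHam w)) := by
          refine Finset.sum_congr rfl fun w _ => ?_
          rw [Finset.sum_mul]
      _ = ∑ w : Fin m → ZMod 2, (if w ∈ C then
            (D.card : ℂ) * (c ^ (m - wHam w) * (Complex.I * s) ^ (wHam w)) else 0) := by
          refine Finset.sum_congr rfl fun w _ => ?_
          rw [hchar w]
          by_cases hw : w ∈ C <;> simp [hw]
      _ = ∑ w ∈ D, (D.card : ℂ) * (c ^ (m - wHam w) * (Complex.I * s) ^ (wHam w)) := by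
          rw [hD, Finset.sum_filter]
      _ = (D.card : ℂ) * ∑ w ∈ D, (c ^ (m - wHam w) * (Complex.I * s) ^ (wHam w)) := by
          rw [Finset.mul_sum]
  have hDpos : 0 < D.card :=
    Finset.card_pos.mpr ⟨0, (hmemD 0).mpr C.zero_mem⟩
  have hcardne : ((D.card : ℕ) : ℂ) ≠ 0 := Nat.cast_ne_zero.mpr hDpos.ne'
  have habsT : ∀ v ∈ D, ‖T v‖ = 1 := by
    intro v _
    simp only [hT]
    rw [show (((((m : ℤ) - 2 * (wHam v : ℤ) : ℤ) : ℝ) : ℂ) * (θ : ℂ) * I)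
        = (((((m : ℤ) - 2 * (wHam v : ℤ) : ℤ) : ℝ) * θ : ℝ) : ℂ) * I by push_cast; ring]
    exact Complex.norm_exp_ofReal_mul_I _
  have key : (∑ v ∈ D, (Complex.I * (Real.tan θ : ℂ)) ^ wHam v = c⁻¹ ^ m)
      ↔ (∑ v ∈ D, T v = (D.card : ℂ)) := by
    constructor
    · intro h
      rw [hMacW, hGsum, h, ← mul_pow, mul_inv_cancel₀ hcne, one_pow, mul_one]
    · intro h
      rw [hMacW, hGsum] at h
      have h1 : c ^ m * ∑ v ∈ D, (Complex.I * (Real.tan θ : ℂ)) ^ wHam v = 1 := by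
        have := h.trans (mul_one ((D.card : ℕ) : ℂ)).symm
        exact mul_left_cancel₀ hcardne this
      rw [inv_pow]
      exact eq_inv_of_mul_eq_one_left (by rw [mul_comm]; exact h1)
  rw [hsum_eq, key, sum_eq_card_iff D T habsT]
  constructor
  · intro h v hv
    exact (exp_eq_one_iff_dvd ℓ ((m : ℤ) - 2 * (wHam v : ℤ)) θ hθ).mp
      (h v ((hmemD v).mpr hv))
  · intro h v hv
    exact (exp_eq_one_iff_dvd ℓ ((m : ℤ) - 2 * (wHam v : ℤ)) θ hθ).mpr
      (h v ((hmemD v).mp hv))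

end
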